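/- arXiv:2006.16686 — 6 statements merged into one kernel-verified Lean document; each statement's English description precedes it below -/
import Mathlib

section
/- For every natural number n ≥ 1, n! ≤ e · n^(n+1/2) · e^(−n). -/
open Real

theorem stirling_upper (n : ℕ) (hn : 1 ≤ n) :
    (Nat.factorial n : ℝ) ≤ Real.exp 1 * (n : ℝ) ^ ((n : ℝ) + 1/2) * Real.exp (-(n : ℝ)) := by
  have hn0 : (0:ℝ) < n := by exact_mod_cast hn
  obtain ⟨m, rfl⟩ := Nat.exists_eq_add_of_le hn
  set k := 1 + m with hk
  have hmono : Real.log (Stirling.stirlingSeq k) ≤ Real.log (Stirling.stirlingSeq 1) := by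
    have := Stirling.log_stirlingSeq'_antitone (Nat.zero_le m)
    simpa [Function.comp, Nat.succ_eq_add_one, hk, Nat.add_comm] using this
  have hpos : 0 < Stirling.stirlingSeq k := by
    have := Stirling.stirlingSeq'_pos m
    simpa [hk, Nat.add_comm] using this
  have hle : Stirling.stirlingSeq k ≤ Stirling.stirlingSeq 1 := by
    have h1 : 0 < Stirling.stirlingSeq 1 := by simpa using Stirling.stirlingSeq'_pos 0
    exact (Real.log_le_log_iff hpos h1).mp hmono
  rw [Stirling.stirlingSeq_one] at hle
  have hden : 0 < Real.sqrt (2 * k : ℝ) * ((k : ℝ) / Real.exp 1) ^ k := by positivity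
  have hfact : (Nat.factorial k : ℝ) =
      Stirling.stirlingSeq k * (Real.sqrt (2 * k : ℝ) * ((k : ℝ) / Real.exp 1) ^ k) := by
    rw [Stirling.stirlingSeq]
    field_simp
  rw [hfact]
  calc Stirling.stirlingSeq k * (Real.sqrt (2 * k : ℝ) * ((k : ℝ) / Real.exp 1) ^ k)
      ≤ (Real.exp 1 / Real.sqrt 2) * (Real.sqrt (2 * k : ℝ) * ((k : ℝ) / Real.exp 1) ^ k) := by
        exact mul_le_mul_of_nonneg_right hle hden.le
    _ = Real.exp 1 * (k : ℝ) ^ ((k : ℝ) + 1/2) * Real.exp (-(k : ℝ)) := by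
        rw [Real.sqrt_mul (by norm_num : (0:ℝ) ≤ 2)]
        have hek : Real.exp (-(k : ℝ)) = 1 / Real.exp 1 ^ k := by
          rw [Real.exp_neg, ← Real.exp_nat_mul, mul_one, one_div]
        have hrk : (k : ℝ) ^ ((k : ℝ) + 1/2) = (k : ℝ) ^ k * Real.sqrt k := by
          rw [Real.rpow_add hn0, Real.rpow_natCast, ← Real.sqrt_eq_rpow]
        have h2 : Real.sqrt 2 ≠ 0 := by positivity
        have he : Real.exp 1 ^ k ≠ 0 := by positivity
        rw [div_pow, hek, hrk]
        field_simp
end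

section
/- For every natural number n ≥ 1, n! ≥ √(2π) · n^(n+1/2) · e^(−n). -/
open Real

theorem stirling_lower (n : ℕ) (hn : 1 ≤ n) :
    (Nat.factorial n : ℝ) ≥ Real.sqrt (2 * Real.pi) * (n : ℝ) ^ ((n : ℝ) + 1/2) * Real.exp (-(n : ℝ)) := by
  obtain ⟨m, rfl⟩ : ∃ m, n = m + 1 := ⟨n - 1, (Nat.succ_pred_eq_of_pos hn).symm⟩
  set n := m + 1
  have hkey : Real.sqrt Real.pi ≤ Stirling.stirlingSeq n := by
    have hA : Antitone (Stirling.stirlingSeq ∘ Nat.succ) := Stirling.stirlingSeq'_antitone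
    have hT : Filter.Tendsto (Stirling.stirlingSeq ∘ Nat.succ) Filter.atTop
        (nhds (Real.sqrt Real.pi)) := by
      rw [Function.comp_def]
      exact (Filter.tendsto_add_atTop_iff_nat 1).mpr Stirling.tendsto_stirlingSeq_sqrt_pi
    exact hA.le_of_tendsto hT m
  have hnpos : (0 : ℝ) < n := by positivity
  have hdenom : (0 : ℝ) < Real.sqrt (2 * n) * ((n : ℝ) / Real.exp 1) ^ n := by positivity
  have hfact : (Nat.factorial n : ℝ) =
      Stirling.stirlingSeq n * (Real.sqrt (2 * n) * ((n : ℝ) / Real.exp 1) ^ n) := by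
    rw [Stirling.stirlingSeq]
    field_simp
  rw [ge_iff_le, hfact]
  have heq : Real.sqrt (2 * Real.pi) * (n : ℝ) ^ ((n : ℝ) + 1/2) * Real.exp (-(n : ℝ))
      = Real.sqrt Real.pi * (Real.sqrt (2 * n) * ((n : ℝ) / Real.exp 1) ^ n) := by
    rw [Real.sqrt_mul (by norm_num), Real.sqrt_mul (by norm_num),
      Real.rpow_add hnpos, Real.rpow_natCast, div_pow, Real.exp_neg,
      ← Real.exp_nat_mul, mul_one]
    have : (n : ℝ) ^ ((1:ℝ)/2) = Real.sqrt n := by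
      rw [Real.sqrt_eq_rpow]
    rw [this]
    field_simp
  rw [heq]
  exact mul_le_mul_of_nonneg_right hkey hdenom.le
end

section
/- Let ε ∈ (0, 1/2), let n ≥ 1 be a natural number, let c = e/(ε·π), let k = 4·⌈c²·n⁴⌉ and μ = k/2, and let X ~ Bin(k, 1/2). Then Pr[μ − n² ≤ X ≤ μ + n²] ≤ (2e/π)·(1/c) = 2ε. -/
set_option maxHeartbeats 1000000
open Real Finset

lemma sqrt_pi_le_stirling (m : ℕ) (hm : 1 ≤ m) : Real.sqrt π ≤ Stirling.stirlingSeq m := by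
  obtain ⟨j, rfl⟩ : ∃ j, m = j + 1 := ⟨m - 1, by omega⟩
  have ht : Filter.Tendsto (Stirling.stirlingSeq ∘ Nat.succ) Filter.atTop (nhds (Real.sqrt π)) :=
    Stirling.tendsto_stirlingSeq_sqrt_pi.comp (Filter.tendsto_add_atTop_nat 1)
  exact Stirling.stirlingSeq'_antitone.le_of_tendsto ht j

lemma stirling_le (m : ℕ) (hm : 1 ≤ m) : Stirling.stirlingSeq m ≤ Real.exp 1 / Real.sqrt 2 := by
  obtain ⟨j, rfl⟩ : ∃ j, m = j + 1 := ⟨m - 1, by omega⟩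
  have := Stirling.stirlingSeq'_antitone (Nat.zero_le j)
  simpa using this

lemma centralBinom_formula (m : ℕ) (hm : 1 ≤ m) :
    (Nat.centralBinom m : ℝ) =
      Stirling.stirlingSeq (2 * m) / (Stirling.stirlingSeq m) ^ 2 * 4 ^ m / Real.sqrt m := by
  have hm0 : (0:ℝ) < m := by exact_mod_cast hm
  have hfact : ∀ j : ℕ, 1 ≤ j → ((j.factorial : ℝ)) = Stirling.stirlingSeq j * (Real.sqrt (2 * j) * ((j : ℝ) / Real.exp 1) ^ j) := by
    intro j hj
    have hj0 : (0:ℝ) < j := by exact_mod_cast hj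
    have hden : Real.sqrt (2 * j) * ((j : ℝ) / Real.exp 1) ^ j ≠ 0 := by positivity
    rw [Stirling.stirlingSeq, div_mul_cancel₀ _ hden]
  have h1 := hfact m hm
  have h2 := hfact (2 * m) (by omega)
  have hcb : (Nat.centralBinom m : ℝ) = ((2*m).factorial : ℝ) / ((m.factorial : ℝ) * (m.factorial : ℝ)) := by
    rw [Nat.centralBinom, Nat.cast_choose ℝ (by omega), show 2*m-m = m from by omega]
  have hsqrt2m : Real.sqrt (2 * ((2*m : ℕ) : ℝ)) = 2 * Real.sqrt m := by
    push_cast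
    rw [show (2 : ℝ) * (2 * m) = 4 * m by ring, Real.sqrt_mul (by norm_num),
      show (4:ℝ) = 2^2 by norm_num, Real.sqrt_sq (by norm_num)]
  have hsq : (Real.sqrt (2 * m : ℝ)) * (Real.sqrt (2 * m : ℝ)) = 2 * m :=
    Real.mul_self_sqrt (by positivity)
  have hpow : (((2*m : ℕ) : ℝ) / Real.exp 1) ^ (2*m) = 4 ^ m * (((m:ℝ) / Real.exp 1) ^ m) ^ 2 := by
    push_cast
    rw [show ((2:ℝ) * m) / Real.exp 1 = 2 * ((m:ℝ)/Real.exp 1) by ring, mul_pow, ← pow_mul,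
      pow_mul 2 2 m]
    ring_nf
  rw [hcb, h1, h2, hsqrt2m, hpow]
  have hs : 0 < Stirling.stirlingSeq m := by
    have := Stirling.stirlingSeq'_pos (m - 1)
    rwa [show m - 1 + 1 = m from by omega] at this
  have hsm : (0:ℝ) < Real.sqrt m := Real.sqrt_pos.2 hm0
  set S := Stirling.stirlingSeq m
  set T := Stirling.stirlingSeq (2 * m)
  set A := Real.sqrt (2 * (m:ℝ)) with hA
  set P := ((m:ℝ)/Real.exp 1) ^ m with hPdef
  have hP : (0:ℝ) < P := by rw [hPdef]; positivity
  have hm' : (m:ℝ) = Real.sqrt m * Real.sqrt m := (Real.mul_self_sqrt hm0.le).symm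
  have hden : S*(A*P) * (S*(A*P)) = S^2 * (2*(m:ℝ)) * P^2 := by
    rw [← hsq]; ring
  rw [hden]
  field_simp
  linear_combination (-T) * hm'



lemma centralBinom_le_bound (m : ℕ) (hm : 1 ≤ m) :
    (Nat.centralBinom m : ℝ) ≤ Real.exp 1 / (Real.sqrt 2 * π) * 4 ^ m / Real.sqrt m := by
  have hm0 : (0:ℝ) < m := by exact_mod_cast hm
  have hsm : (0:ℝ) < Real.sqrt m := Real.sqrt_pos.2 hm0
  have hs : 0 < Stirling.stirlingSeq m := by
    have := Stirling.stirlingSeq'_pos (m - 1)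
    rwa [show m - 1 + 1 = m from by omega] at this
  have hπ := Real.pi_pos
  have hT : Stirling.stirlingSeq (2 * m) ≤ Real.exp 1 / Real.sqrt 2 := stirling_le _ (by omega)
  have hS : π ≤ (Stirling.stirlingSeq m) ^ 2 := by
    have h := sqrt_pi_le_stirling m hm
    nlinarith [Real.sq_sqrt hπ.le, Real.sqrt_nonneg π]
  rw [centralBinom_formula m hm]
  have key : Stirling.stirlingSeq (2 * m) / (Stirling.stirlingSeq m) ^ 2 ≤
      Real.exp 1 / (Real.sqrt 2 * π) := by
    calc Stirling.stirlingSeq (2 * m) / (Stirling.stirlingSeq m) ^ 2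
        ≤ (Real.exp 1 / Real.sqrt 2) / π := by
          gcongr
      _ = Real.exp 1 / (Real.sqrt 2 * π) := by rw [div_div]
  gcongr

theorem binom_central_mass_le_two_eps (ε : ℝ) (hε : 0 < ε) (hε' : ε < 1/2)
    (n : ℕ) (hn : 1 ≤ n)
    (c : ℝ) (hc : c = Real.exp 1 / (ε * Real.pi))
    (k : ℕ) (hk : k = 4 * ⌈c ^ 2 * (n : ℝ) ^ 4⌉₊)
    (μ : ℕ) (hμ : μ = k / 2) :
    (∑ l ∈ Finset.Icc (μ - n ^ 2) (μ + n ^ 2), (k.choose l : ℝ) * (1/2) ^ k ≤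
      (2 * Real.exp 1 / Real.pi) * (1 / c)) ∧
    (2 * Real.exp 1 / Real.pi) * (1 / c) = 2 * ε := by
  have hπ := Real.pi_pos
  have he := Real.exp_pos 1
  have hεπ : ε * π < Real.exp 1 := by nlinarith [Real.pi_lt_d2, Real.exp_one_gt_d9]
  have hc0 : 0 < c := by rw [hc]; positivity
  have hc1 : 1 < c := by rw [hc, lt_div_iff₀ (by positivity)]; linarith
  refine ⟨?_, by rw [hc]; field_simp⟩
  set m := ⌈c ^ 2 * (n : ℝ) ^ 4⌉₊ with hmdef
  have hn0 : (0:ℝ) < (n:ℝ) := by exact_mod_cast hn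
  have hmle : c ^ 2 * (n:ℝ) ^ 4 ≤ m := Nat.le_ceil _
  have hn4 : ((n ^ 4 : ℕ) : ℝ) ≤ m := by
    push_cast
    have hcsq : 1 ≤ c ^ 2 := by nlinarith
    nlinarith [pow_pos hn0 4, hcsq, hmle]
  have hn4' : n ^ 4 ≤ m := by exact_mod_cast hn4
  have hm1 : 1 ≤ m := le_trans (Nat.one_le_pow _ _ (by omega)) hn4'
  have hμm : μ = 2 * m := by omega
  have hk2 : k = 2 * μ := by omega
  have hn2μ : n ^ 2 ≤ μ := by
    have : n ^ 2 ≤ n ^ 4 := Nat.pow_le_pow_right hn (by norm_num)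
    omega
  have hμ1 : 1 ≤ μ := by omega
  have hμ0 : (0:ℝ) < μ := by exact_mod_cast hμ1
  -- sum bound by the central term
  have hterm : ∀ l ∈ Finset.Icc (μ - n ^ 2) (μ + n ^ 2),
      (k.choose l : ℝ) * (1/2) ^ k ≤ (Nat.centralBinom μ : ℝ) * (1/2) ^ k := by
    intro l _
    have : k.choose l ≤ Nat.centralBinom μ := by
      rw [hk2]; exact Nat.choose_le_centralBinom l μ
    have h2 : (0:ℝ) ≤ (1/2 : ℝ) ^ k := by positivity
    exact mul_le_mul_of_nonneg_right (by exact_mod_cast this) h2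
  have hsum := Finset.sum_le_card_nsmul _ _ _ hterm
  have hcard : (Finset.Icc (μ - n ^ 2) (μ + n ^ 2)).card = 2 * n ^ 2 + 1 := by
    rw [Nat.card_Icc]; omega
  rw [hcard, nsmul_eq_mul] at hsum
  refine hsum.trans ?_
  push_cast
  -- central binomial bound
  have hcb := centralBinom_le_bound μ hμ1
  have hpw : ((1:ℝ)/2) ^ k = ((4:ℝ) ^ μ)⁻¹ := by
    rw [hk2, pow_mul]
    norm_num
    rw [one_div, inv_pow]
  have hsμ : (0:ℝ) < Real.sqrt μ := Real.sqrt_pos.2 hμ0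
  have step1 : ((2 * n ^ 2 + 1 : ℕ) : ℝ) * ((Nat.centralBinom μ : ℝ) * (1/2) ^ k) ≤
      ((2 * n ^ 2 + 1 : ℕ) : ℝ) * (Real.exp 1 / (Real.sqrt 2 * π) / Real.sqrt μ) := by
    have h4 : (0:ℝ) < (4:ℝ) ^ μ := by positivity
    have : (Nat.centralBinom μ : ℝ) * (1/2) ^ k ≤ Real.exp 1 / (Real.sqrt 2 * π) / Real.sqrt μ := by
      rw [hpw]
      calc (Nat.centralBinom μ : ℝ) * ((4:ℝ) ^ μ)⁻¹
          ≤ (Real.exp 1 / (Real.sqrt 2 * π) * 4 ^ μ / Real.sqrt μ) * ((4:ℝ) ^ μ)⁻¹ := by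
            gcongr
        _ = Real.exp 1 / (Real.sqrt 2 * π) / Real.sqrt μ := by
            field_simp
    gcongr
  push_cast at step1
  refine step1.trans ?_
  -- √μ ≥ √2 * c * n²
  have hsqrtμ : Real.sqrt 2 * c * (n:ℝ) ^ 2 ≤ Real.sqrt μ := by
    have h1 : (Real.sqrt 2 * c * (n:ℝ) ^ 2) ^ 2 ≤ (μ:ℝ) := by
      have h2 : (Real.sqrt 2) ^ 2 = 2 := Real.sq_sqrt (by norm_num)
      have : (μ:ℝ) = 2 * m := by exact_mod_cast hμm
      nlinarith [hmle]
    have h0 : 0 ≤ Real.sqrt 2 * c * (n:ℝ) ^ 2 := by positivity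
    calc Real.sqrt 2 * c * (n:ℝ) ^ 2 = Real.sqrt ((Real.sqrt 2 * c * (n:ℝ) ^ 2) ^ 2) :=
          (Real.sqrt_sq h0).symm
      _ ≤ Real.sqrt μ := Real.sqrt_le_sqrt h1
  have hpos2 : (0:ℝ) < Real.sqrt 2 * c * (n:ℝ) ^ 2 := by positivity
  calc (2 * (n:ℝ) ^ 2 + 1) * (Real.exp 1 / (Real.sqrt 2 * π) / Real.sqrt μ)
      ≤ (2 * (n:ℝ) ^ 2 + 1) * (Real.exp 1 / (Real.sqrt 2 * π) / (Real.sqrt 2 * c * (n:ℝ) ^ 2)) := by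
        gcongr
    _ ≤ (4 * (n:ℝ) ^ 2) * (Real.exp 1 / (Real.sqrt 2 * π) / (Real.sqrt 2 * c * (n:ℝ) ^ 2)) := by
        gcongr
        have hn1 : (1:ℝ) ≤ (n:ℝ) := by exact_mod_cast hn
        nlinarith
    _ = 2 * Real.exp 1 / π * (1 / c) := by
        have h22 : Real.sqrt 2 * Real.sqrt 2 = 2 := Real.mul_self_sqrt (by norm_num)
        field_simp
        linear_combination (-2) * h22
end

section
/- Let ε ∈ (0, 1/2), n ≥ 1, c = e/(ε·π), k = 4·⌈c²·n⁴⌉, μ = k/2, and X ~ Bin(k, 1/2). Then Pr[X > μ + n²] ≥ 1/2 − ε. -/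
open Real Finset

lemma cb_sq_bound : ∀ m : ℕ, (Nat.centralBinom m)^2 * (3*m+1) ≤ 16^m := by
  intro m
  induction m with
  | zero => simp [Nat.centralBinom]
  | succ m ih =>
    have hrec := Nat.succ_mul_centralBinom_succ m
    have hpos : 0 < (m+1)^2 := by positivity
    apply Nat.le_of_mul_le_mul_left _ hpos
    calc (m+1)^2 * ((Nat.centralBinom (m+1))^2 * (3*(m+1)+1))
        = ((m+1) * Nat.centralBinom (m+1))^2 * (3*m+4) := by ring
      _ = (2*(2*m+1)*Nat.centralBinom m)^2 * (3*m+4) := by rw [hrec]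
      _ = (Nat.centralBinom m)^2 * (4*(2*m+1)^2*(3*m+4)) := by ring
      _ ≤ (Nat.centralBinom m)^2 * (16*(m+1)^2*(3*m+1)) := by
          apply Nat.mul_le_mul_left; nlinarith
      _ = 16*(m+1)^2 * ((Nat.centralBinom m)^2 * (3*m+1)) := by ring
      _ ≤ 16*(m+1)^2 * 16^m := Nat.mul_le_mul_left _ ih
      _ = (m+1)^2 * 16^(m+1) := by ring

lemma aux_sq1 (ε c x M : ℝ) (hε : 0 < ε) (hx1 : 1 ≤ x)
    (hcεπ : c * (ε * Real.pi) = Real.exp 1) (hM : c^2 * x^2 ≤ M) :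
    (2*x+1)^2 ≤ 4*ε^2*(6*M+1) := by
  have hπ : Real.pi < 3.15 := by have := Real.pi_lt_d2; linarith
  have hπ0 : 0 < Real.pi := Real.pi_pos
  have he : (2.7 : ℝ) < Real.exp 1 := by have := Real.exp_one_gt_d9; linarith
  have hπ2 : Real.pi^2 < 9.9225 := by nlinarith
  have he2 : (7.29:ℝ) < (Real.exp 1)^2 := by nlinarith
  have hcε : c^2 * ε^2 * Real.pi^2 = (Real.exp 1)^2 := by rw [← hcεπ]; ring
  have hce38 : (3:ℝ)/8 ≤ c^2 * ε^2 := by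
    by_contra hlt
    push_neg at hlt
    have hb : c^2*ε^2*Real.pi^2 ≤ (3/8)*Real.pi^2 :=
      mul_le_mul_of_nonneg_right hlt.le (sq_nonneg _)
    linarith
  have h1 : (2*x+1)^2 ≤ 9 * x^2 := by nlinarith
  have h2 : 9 * x^2 ≤ 24 * (c^2 * ε^2) * x^2 := by
    nlinarith [mul_le_mul_of_nonneg_right hce38 (sq_nonneg x)]
  have h4 : 24 * (c^2 * ε^2) * x^2 ≤ 24 * ε^2 * M := by
    have := mul_le_mul_of_nonneg_left hM (by positivity : (0:ℝ) ≤ 24 * ε^2)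
    nlinarith [this]
  nlinarith [sq_nonneg ε]

theorem binom_tail_ge (ε : ℝ) (hε : 0 < ε) (hε' : ε < 1/2)
    (n : ℕ) (hn : 1 ≤ n)
    (c : ℝ) (hc : c = Real.exp 1 / (ε * Real.pi))
    (k : ℕ) (hk : k = 4 * ⌈c ^ 2 * (n : ℝ) ^ 4⌉₊)
    (μ : ℕ) (hμ : μ = k / 2) :
    ∑ l ∈ Finset.Ioc (μ + n ^ 2) k, (k.choose l : ℝ) * (1/2) ^ k ≥ 1/2 - ε := by
  set m : ℕ := ⌈c ^ 2 * (n : ℝ) ^ 4⌉₊ with hm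
  clear_value m
  have hk4 : k = 4 * m := hk
  have hμ2 : μ = 2 * m := by omega
  -- basic numeric facts
  have hπ : Real.pi < 3.15 := by
    have := Real.pi_lt_d2; linarith
  have hπ0 : 0 < Real.pi := Real.pi_pos
  have he : (2.7 : ℝ) < Real.exp 1 := by
    have := Real.exp_one_gt_d9; linarith
  have hn1 : (1 : ℝ) ≤ (n : ℝ) := by exact_mod_cast hn
  have hεπ : 0 < ε * Real.pi := by positivity
  have hcεπ : c * (ε * Real.pi) = Real.exp 1 := by
    rw [hc]; field_simp
  have hc1 : 1 < c := by
    nlinarith [Real.exp_one_gt_d9]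
  have hmr : c ^ 2 * (n : ℝ) ^ 4 ≤ (m : ℝ) := by rw [hm]; exact Nat.le_ceil _
  -- n^2 ≤ 2m (as naturals)
  have hn2m : n ^ 2 ≤ 2 * m := by
    have hx1 : (1:ℝ) ≤ (n:ℝ)^2 := by nlinarith
    have hn4 : (n:ℝ)^2 ≤ (n:ℝ)^4 := by nlinarith [sq_nonneg ((n:ℝ)^2 - 1)]
    have hc2 : (1:ℝ) ≤ c^2 := by nlinarith
    have hcc : (n:ℝ)^4 ≤ c^2*(n:ℝ)^4 := by
      nlinarith [mul_le_mul_of_nonneg_right hc2 (by positivity : (0:ℝ) ≤ (n:ℝ)^4)]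
    have h1 : ((n : ℝ)) ^ 2 ≤ (m : ℝ) := by linarith
    have : ((n ^ 2 : ℕ) : ℝ) ≤ (m : ℝ) := by push_cast; linarith
    have := Nat.cast_le (α := ℝ) |>.mp this
    omega
  set A : ℕ := 2 * m - n ^ 2 with hA
  set B : ℕ := 2 * m + n ^ 2 with hB
  set f : ℕ → ℝ := fun l => (k.choose l : ℝ) * (1/2) ^ k with hf
  clear_value A B
  -- total sum = 1
  have htot : ∑ l ∈ Finset.range (k + 1), f l = 1 := by
    simp only [hf]
    rw [← Finset.sum_mul]
    rw [← Nat.cast_sum, Nat.sum_range_choose]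
    push_cast
    rw [← mul_pow]
    norm_num
  -- decomposition
  have hIoc : Finset.Ioc (μ + n ^ 2) k = Finset.Ico (B + 1) (k + 1) := by
    ext x; simp [hμ2, hB]
  have hdec : ∑ l ∈ Finset.range (k+1), f l
      = (∑ l ∈ Finset.Ico 0 A, f l) + (∑ l ∈ Finset.Ico A (B+1), f l)
        + (∑ l ∈ Finset.Ico (B+1) (k+1), f l) := by
    rw [Finset.sum_Ico_consecutive f (Nat.zero_le A) (by omega),
        Finset.sum_Ico_consecutive f (Nat.zero_le (B+1)) (by omega)]
    rw [Finset.range_eq_Ico]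
  -- symmetry
  have hsym : ∑ l ∈ Finset.Ico 0 A, f l = ∑ l ∈ Finset.Ico (B+1) (k+1), f l := by
    apply Finset.sum_nbij' (i := fun l => k - l) (j := fun l => k - l)
    · intro a ha; simp only [Finset.mem_Ico] at *; omega
    · intro a ha; simp only [Finset.mem_Ico] at *; omega
    · intro a ha; simp only [Finset.mem_Ico] at ha; omega
    · intro a ha; simp only [Finset.mem_Ico] at ha; omega
    · intro a ha
      simp only [Finset.mem_Ico] at ha
      simp only [hf]
      rw [Nat.choose_symm (by omega)]
  -- middle bound
  have hmid : ∑ l ∈ Finset.Ico A (B+1), f l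
      ≤ (2 * (n:ℝ)^2 + 1) * ((k.choose μ : ℝ) * (1/2)^k) := by
    have hcard : (Finset.Ico A (B+1)).card = 2 * n ^ 2 + 1 := by
      rw [Nat.card_Ico]; omega
    calc ∑ l ∈ Finset.Ico A (B+1), f l
        ≤ (Finset.Ico A (B+1)).card • ((k.choose μ : ℝ) * (1/2)^k) := by
          apply Finset.sum_le_card_nsmul
          intro x _
          simp only [hf]
          have hch : k.choose x ≤ k.choose μ := by
            rw [hμ]; exact Nat.choose_le_middle x k
          have : (0:ℝ) < (1/2)^k := by positivity
          exact mul_le_mul_of_nonneg_right (by exact_mod_cast hch) (le_of_lt this)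
      _ = (2 * (n:ℝ)^2 + 1) * ((k.choose μ : ℝ) * (1/2)^k) := by
          rw [hcard, nsmul_eq_mul]; push_cast; ring
  -- central binomial bound, real version
  have hcbR : ((k.choose μ : ℝ))^2 * (6 * (m:ℝ) + 1) ≤ (16:ℝ)^m * (16:ℝ)^m := by
    have h := cb_sq_bound (2 * m)
    have hcb : k.choose μ = Nat.centralBinom (2 * m) := by
      rw [hk4, hμ2, Nat.centralBinom_eq_two_mul_choose]
      norm_num [show 2 * (2*m) = 4*m by ring]
    rw [hcb]
    have : ((Nat.centralBinom (2*m))^2 * (3*(2*m)+1) : ℝ) ≤ ((16^(2*m) : ℕ) : ℝ) := by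
      exact_mod_cast h
    push_cast at this
    calc ((Nat.centralBinom (2*m) : ℝ))^2 * (6 * (m:ℝ) + 1)
        = ((Nat.centralBinom (2*m) : ℝ))^2 * (3*(2*(m:ℝ))+1) := by ring
      _ ≤ (16:ℝ)^(2*m) := by push_cast at this ⊢; linarith
      _ = (16:ℝ)^m * (16:ℝ)^m := by rw [two_mul, pow_add]
  -- key middle mass bound: M ≤ 2ε
  have hM : ∑ l ∈ Finset.Ico A (B+1), f l ≤ 2 * ε := by
    have h16 : (0:ℝ) < (16:ℝ)^m := by positivity
    have hhalf : ((1:ℝ)/2)^k = 1 / (16:ℝ)^m := by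
      rw [hk4, pow_mul]
      norm_num [div_pow]
    -- squared inequality: (2n²+1)² ≤ 4 ε² (6m+1)
    have hsq1 : (2 * (n:ℝ)^2 + 1)^2 ≤ 4 * ε^2 * (6 * (m:ℝ) + 1) := by
      have hx1 : (1:ℝ) ≤ (n:ℝ)^2 := by exact_mod_cast Nat.one_le_pow 2 n (by omega)
      exact aux_sq1 ε c ((n:ℝ)^2) (m:ℝ) hε hx1 hcεπ (le_trans (le_of_eq (by ring)) hmr)
    -- choose bound: (2n²+1) * choose ≤ 2ε * 16^m
    have hcb0 : (0:ℝ) ≤ (k.choose μ : ℝ) := by positivity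
    have hmain : (2 * (n:ℝ)^2 + 1) * (k.choose μ : ℝ) ≤ 2 * ε * (16:ℝ)^m := by
      have hL0 : (0:ℝ) ≤ (2 * (n:ℝ)^2 + 1) * (k.choose μ : ℝ) := by positivity
      have hR0 : (0:ℝ) ≤ 2 * ε * (16:ℝ)^m := by positivity
      have hsq : ((2 * (n:ℝ)^2 + 1) * (k.choose μ : ℝ))^2 ≤ (2 * ε * (16:ℝ)^m)^2 := by
        have h6m : (0:ℝ) < 6 * (m:ℝ) + 1 := by positivity
        rw [← mul_le_mul_iff_of_pos_right h6m]
        calc ((2 * (n:ℝ)^2 + 1) * (k.choose μ : ℝ))^2 * (6 * (m:ℝ) + 1)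
            = (2 * (n:ℝ)^2 + 1)^2 * (((k.choose μ : ℝ))^2 * (6 * (m:ℝ) + 1)) := by ring
          _ ≤ (4 * ε^2 * (6 * (m:ℝ) + 1)) * ((16:ℝ)^m * (16:ℝ)^m) := by
              apply mul_le_mul hsq1 hcbR (by positivity) (by positivity)
          _ = (2 * ε * (16:ℝ)^m)^2 * (6 * (m:ℝ) + 1) := by ring
      exact le_of_pow_le_pow_left₀ two_ne_zero hR0 hsq
    calc ∑ l ∈ Finset.Ico A (B+1), f l
        ≤ (2 * (n:ℝ)^2 + 1) * ((k.choose μ : ℝ) * (1/2)^k) := hmid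
      _ = ((2 * (n:ℝ)^2 + 1) * (k.choose μ : ℝ)) * (1 / (16:ℝ)^m) := by
          rw [hhalf]; ring
      _ ≤ (2 * ε * (16:ℝ)^m) * (1 / (16:ℝ)^m) := by
          apply mul_le_mul_of_nonneg_right hmain (by positivity)
      _ = 2 * ε := by field_simp
  -- conclude
  rw [hIoc]
  have : 1 = (∑ l ∈ Finset.Ico 0 A, f l) + (∑ l ∈ Finset.Ico A (B+1), f l)
        + (∑ l ∈ Finset.Ico (B+1) (k+1), f l) := by rw [← hdec, htot]
  rw [hsym] at this
  linarith
end

section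
/- For every real m ≥ 3, (1/2 + 1/(4m) − 1/(4m²)) · ((99/100)·e^(−1/50))^(4/m) > 1/2. -/
open Real

theorem fair_choice_key_ineq (m : ℝ) (hm : 3 ≤ m) :
    (1/2 + 1/(4 * m) - 1/(4 * m ^ 2)) * ((99/100) * Real.exp (-(1/50))) ^ (4 / m) >
      1/2 := by
  have hm0 : (0:ℝ) < m := by linarith
  have hc : (0:ℝ) < (99/100) * Real.exp (-(1/50)) := by positivity
  -- log bound
  have hlog1 : Real.log (100/99) ≤ 1/99 := by
    have := Real.add_one_le_exp (Real.log (100/99))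
    rw [Real.exp_log (by norm_num : (0:ℝ) < 100/99)] at this
    linarith
  have hlogc : Real.log ((99/100) * Real.exp (-(1/50))) ≥ -(149/4950) := by
    rw [Real.log_mul (by norm_num) (Real.exp_ne_zero _), Real.log_exp]
    have : Real.log (99/100) = - Real.log (100/99) := by
      rw [← Real.log_inv]; norm_num
    rw [this]
    linarith
  have hrpow : ((99/100) * Real.exp (-(1/50))) ^ (4 / m)
      = Real.exp (Real.log ((99/100) * Real.exp (-(1/50))) * (4 / m)) :=
    Real.rpow_def_of_pos hc _
  have hdiv : (0:ℝ) < 4 / m := by positivity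
  have hexp : Real.exp (Real.log ((99/100) * Real.exp (-(1/50))) * (4 / m))
      ≥ 1 - (149/4950) * (4 / m) := by
    have h1 := Real.add_one_le_exp (Real.log ((99/100) * Real.exp (-(1/50))) * (4 / m))
    have h2 : Real.log ((99/100) * Real.exp (-(1/50))) * (4 / m)
        ≥ -(149/4950) * (4 / m) := by
      apply mul_le_mul_of_nonneg_right hlogc (le_of_lt hdiv)
    linarith
  have hA : (0:ℝ) < 1/2 + 1/(4 * m) - 1/(4 * m ^ 2) := by
    have h1 : 1/(4 * m ^ 2) ≤ 1/(4 * m) := by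
      apply div_le_div_of_nonneg_left (by norm_num) (by positivity)
      nlinarith
    linarith
  have hchain : (1/2 + 1/(4 * m) - 1/(4 * m ^ 2)) * ((99/100) * Real.exp (-(1/50))) ^ (4 / m)
      ≥ (1/2 + 1/(4 * m) - 1/(4 * m ^ 2)) * (1 - (149/4950) * (4 / m)) := by
    rw [hrpow]
    exact mul_le_mul_of_nonneg_left hexp (le_of_lt hA)
  have hpoly : (1/2 + 1/(4 * m) - 1/(4 * m ^ 2)) * (1 - (149/4950) * (4 / m)) > 1/2 := by
    rw [gt_iff_lt, ← sub_pos]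
    have hm2 : (0:ℝ) < m ^ 2 := by positivity
    have hm3 : (0:ℝ) < m ^ 3 := by positivity
    have key : (1/2 + 1/(4 * m) - 1/(4 * m ^ 2)) * (1 - (149/4950) * (4 / m)) - 1/2
        = (1879 * m ^ 2 - 2773 * m + 298) / (9900 * m ^ 3) := by
      field_simp
      ring
    rw [key]
    apply div_pos _ (by positivity)
    nlinarith
  linarith
end

section
/- Let m ≥ 3, let ε = 1/(100·m·log₂ m), let N = 2^l with 2m² ≤ N ≤ 4m², and let G ⊆ {0,…,m−1} with |G| > m/2. Let b₁,…,b_l be independent bits each satisfying Pr[b_j = b] ≥ 1/2 − ε for both b ∈ {0,1}, and let r ∈ {0,…,N−1} be the number with binary digits b₁…b_l. Then Pr[(r mod m) ∈ G] ≥ (1 − m/N)·(1/2 + 1/(2m))·(1 − 2ε)^(log₂ N), and this quantity is strictly greater than 1/2. -/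
set_option maxHeartbeats 1000000

open MeasureTheory ProbabilityTheory Finset Real

lemma fcv_bitsum (l s : ℕ) :
    ∑ i ∈ Finset.range l, (if s.testBit i then 2^i else 0) = s % 2^l := by
  induction l with
  | zero => simp [Nat.mod_one]
  | succ n ih =>
    rw [Finset.sum_range_succ, ih, Nat.mod_pow_succ, Nat.testBit_eq_decide_div_mod_eq]
    have : s / 2^n % 2 = 0 ∨ s / 2^n % 2 = 1 := by omega
    rcases this with h | h <;> simp [h]

lemma fcv_bitsum' (l s : ℕ) (hs : s < 2^l) :
    (∑ j : Fin l, if s.testBit (l - 1 - (j:ℕ)) then 2 ^ (l - 1 - (j:ℕ)) else 0) = s := by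
  rw [Fin.sum_univ_eq_sum_range (fun j => if s.testBit (l - 1 - j) then 2 ^ (l - 1 - j) else 0)]
  rw [Finset.sum_range_reflect (fun i => if s.testBit i then 2^i else 0) l]
  rw [fcv_bitsum, Nat.mod_eq_of_lt hs]

theorem fair_choice_validity
    (Ω : Type*) [MeasurableSpace Ω] (P : Measure Ω) [IsProbabilityMeasure P]
    (m : ℕ) (hm : 3 ≤ m)
    (ε : ℝ) (hε : ε = 1 / (100 * (m : ℝ) * Real.logb 2 m))
    (l N : ℕ) (hN : N = 2 ^ l) (hN1 : 2 * m ^ 2 ≤ N) (hN2 : N ≤ 4 * m ^ 2)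
    (G : Finset ℕ) (hG : G ⊆ Finset.range m) (hGcard : (G.card : ℝ) > (m : ℝ) / 2)
    (b : Fin l → Ω → Bool) (hmeas : ∀ j, Measurable (b j))
    (hindep : iIndepFun b P)
    (hbias : ∀ j : Fin l, ∀ c : Bool, (P {ω | b j ω = c}).toReal ≥ 1/2 - ε)
    (r : Ω → ℕ)
    (hr : ∀ ω, r ω = ∑ j : Fin l, (if b j ω then 2 ^ (l - 1 - (j : ℕ)) else 0)) :
    (P {ω | r ω % m ∈ G}).toReal ≥
      (1 - (m : ℝ) / N) * (1/2 + 1/(2 * m)) * (1 - 2 * ε) ^ (Real.logb 2 N) ∧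
    (1 - (m : ℝ) / N) * (1/2 + 1/(2 * m)) * (1 - 2 * ε) ^ (Real.logb 2 N) > 1/2 := by
  classical
  have hm3 : (3:ℝ) ≤ (m:ℝ) := by exact_mod_cast hm
  have hmpos : (0:ℝ) < m := by linarith
  have hmpos' : 0 < m := by omega
  have hL1 : (1:ℝ) ≤ Real.logb 2 m := by
    rw [show (1:ℝ) = Real.logb 2 2 by simp]
    exact Real.logb_le_logb_of_le (by norm_num) (by norm_num) (by linarith)
  have hεpos : 0 < ε := by rw [hε]; positivity
  have hεle : ε ≤ 1/300 := by
    rw [hε, div_le_div_iff₀ (by positivity) (by norm_num)]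
    nlinarith
  have hNR : (N:ℝ) = 2^l := by rw [hN]; push_cast; ring
  have hNposR : (0:ℝ) < N := by rw [hNR]; positivity
  have hNne : (N:ℝ) ≠ 0 := ne_of_gt hNposR
  have hlog : Real.logb 2 (N:ℝ) = l := by rw [hNR, Real.logb_pow]; simp
  have hrpow : (1 - 2*ε) ^ (Real.logb 2 (N:ℝ)) = (1-2*ε)^l := by
    rw [hlog, Real.rpow_natCast]
  have hN2R : (N:ℝ) ≤ 4*(m:ℝ)^2 := by exact_mod_cast hN2
  have hN1R : 2*(m:ℝ)^2 ≤ (N:ℝ) := by exact_mod_cast hN1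
  have hlLe : (l:ℝ) ≤ 2 + 2*Real.logb 2 m := by
    have h1 : Real.logb 2 (N:ℝ) ≤ Real.logb 2 (4*(m:ℝ)^2) :=
      Real.logb_le_logb_of_le (by norm_num) (by positivity) hN2R
    have h2 : Real.logb 2 (4*(m:ℝ)^2) = 2 + 2 * Real.logb 2 m := by
      rw [Real.logb_mul (by norm_num) (by positivity), Real.logb_pow,
        show (4:ℝ) = 2^2 by norm_num, Real.logb_pow]
      simp
    rw [hlog] at h1; linarith
  have hδ : 2*ε*l ≤ 2/(25*m) := by
    have heq : 2*ε*(l:ℝ) = (2*l)/(100*(m:ℝ)*Real.logb 2 m) := by rw [hε]; ring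
    rw [heq, div_le_div_iff₀ (by positivity) (by positivity)]
    nlinarith
  have hc : (1:ℝ) - 2/(25*m) ≤ (1-2*ε)^l := by
    have hb2 := one_add_mul_le_pow (a := -(2*ε)) (by linarith) l
    have : (1:ℝ) + l * (-(2*ε)) = 1 - 2*ε*l := by ring
    rw [this] at hb2
    have : ((1:ℝ) + -(2*ε)) = 1 - 2*ε := by ring
    rw [this] at hb2
    linarith
  have hcpos : (0:ℝ) < 1 - 2/(25*m) := by
    rw [sub_pos, div_lt_one (by positivity)]; linarith
  have hεhalf : (0:ℝ) ≤ 1/2 - ε := by linarith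
  -- Part 2
  have hmN : (m:ℝ)/N ≤ 1/(2*m) := by
    rw [div_le_div_iff₀ hNposR (by positivity)]; nlinarith
  have part2 : (1 - (m : ℝ) / N) * (1/2 + 1/(2 * m)) * (1 - 2 * ε) ^ (Real.logb 2 N) > 1/2 := by
    rw [hrpow]
    have key : (1 - 1/(2*(m:ℝ))) * (1/2 + 1/(2*(m:ℝ))) * (1 - 2/(25*(m:ℝ))) > 1/2 := by
      have h : (1 - 1/(2*(m:ℝ))) * (1/2 + 1/(2*(m:ℝ))) * (1 - 2/(25*(m:ℝ))) - 1/2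
          = (21*(m:ℝ)^2 - 27*(m:ℝ) + 2)/(100*(m:ℝ)^3) := by field_simp; ring
      have h2 : 0 < (21*(m:ℝ)^2 - 27*(m:ℝ) + 2)/(100*(m:ℝ)^3) := by
        apply div_pos; nlinarith; positivity
      linarith
    have step : (1 - 1/(2*(m:ℝ))) * (1/2 + 1/(2*(m:ℝ))) * (1 - 2/(25*(m:ℝ)))
        ≤ (1 - (m:ℝ)/N) * (1/2 + 1/(2*m)) * ((1-2*ε)^l) := by
      have f1 : (1:ℝ) - 1/(2*(m:ℝ)) ≤ 1 - (m:ℝ)/N := by linarith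
      have f1' : (0:ℝ) ≤ 1 - 1/(2*(m:ℝ)) := by
        rw [sub_nonneg, div_le_one (by positivity)]; linarith
      have f2 : (0:ℝ) ≤ 1/2 + 1/(2*(m:ℝ)) := by positivity
      have f3 : (0:ℝ) ≤ 1 - 2/(25*(m:ℝ)) := le_of_lt hcpos
      have f0 : (0:ℝ) ≤ 1 - (m:ℝ)/N := by linarith
      exact mul_le_mul (mul_le_mul f1 le_rfl f2 (by linarith)) hc f3 (mul_nonneg f0 f2)
    linarith
  -- Part 1
  refine ⟨?_, part2⟩
  have hrm : Measurable r := by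
    have : r = fun ω => ∑ j : Fin l, (if b j ω then 2 ^ (l - 1 - (j:ℕ)) else 0) := funext hr
    rw [this]
    exact Finset.measurable_sum _ fun j _ =>
      (measurable_of_countable (fun c : Bool => if c then 2 ^ (l - 1 - (j:ℕ)) else 0)).comp
        (hmeas j)
  have key : ∀ s ∈ Finset.range N, ((1:ℝ)/2 - ε)^l ≤ (P {ω | r ω = s}).toReal := by
    intro s hs
    rw [Finset.mem_range] at hs
    set v : Fin l → Bool := fun j => s.testBit (l - 1 - (j:ℕ)) with hv
    have hsub : (⋂ j, {ω | b j ω = v j}) ⊆ {ω | r ω = s} := by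
      intro ω hω
      simp only [Set.mem_iInter, Set.mem_setOf_eq] at hω ⊢
      rw [hr ω]
      rw [Finset.sum_congr rfl (fun j _ => by rw [hω j])]
      exact fcv_bitsum' l s (hN ▸ hs)
    have hprod : P (⋂ j, {ω | b j ω = v j}) = ∏ j, P {ω | b j ω = v j} := by
      apply hindep.meas_iInter
      intro j
      exact ⟨{v j}, measurableSet_singleton _, rfl⟩
    calc ((1:ℝ)/2 - ε)^l
        ≤ (∏ j, P {ω | b j ω = v j}).toReal := by
          rw [ENNReal.toReal_prod]
          rw [show ((1:ℝ)/2-ε)^l = ∏ _j : Fin l, ((1:ℝ)/2 - ε) by simp]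
          exact Finset.prod_le_prod (fun j _ => hεhalf) (fun j _ => hbias j (v j))
      _ ≤ (P {ω | r ω = s}).toReal := by
          rw [← hprod]
          exact ENNReal.toReal_mono (measure_ne_top P _) (measure_mono hsub)
  set S : Finset ℕ := (Finset.range N).filter (fun s => s % m ∈ G) with hS
  have hmeaseq : ∀ s : ℕ, MeasurableSet {ω | r ω = s} := fun s =>
    hrm (measurableSet_singleton s)
  have hdisj : (S : Set ℕ).PairwiseDisjoint (fun s => {ω | r ω = s}) := by
    intro a _ c _ hac
    apply Set.disjoint_left.mpr
    intro ω ha hb2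
    exact hac (by rw [← ha, ← hb2])
  have hunion : ∑ s ∈ S, P {ω | r ω = s} ≤ P {ω | r ω % m ∈ G} := by
    rw [← measure_biUnion_finset hdisj (fun s _ => hmeaseq s)]
    apply measure_mono
    intro ω hω
    simp only [Set.mem_iUnion, Set.mem_setOf_eq] at hω ⊢
    obtain ⟨s, hsS, hωs⟩ := hω
    rw [hS, Finset.mem_filter] at hsS
    rw [hωs]; exact hsS.2
  have htR : ∑ s ∈ S, (P {ω | r ω = s}).toReal ≤ (P {ω | r ω % m ∈ G}).toReal := by
    rw [← ENNReal.toReal_sum (fun s _ => measure_ne_top P _)]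
    exact ENNReal.toReal_mono (measure_ne_top P _) hunion
  have hsum_ge : (S.card : ℝ) * ((1/2:ℝ) - ε)^l ≤ ∑ s ∈ S, (P {ω | r ω = s}).toReal := by
    calc (S.card : ℝ) * ((1/2:ℝ) - ε)^l = ∑ _s ∈ S, ((1/2:ℝ) - ε)^l := by
          rw [Finset.sum_const, nsmul_eq_mul]
      _ ≤ ∑ s ∈ S, (P {ω | r ω = s}).toReal :=
          Finset.sum_le_sum (fun s hs => key s (Finset.mem_of_mem_filter s hs))
  -- card bound
  have hcard : G.card * (N/m) ≤ S.card := by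
    rw [← Finset.card_range (N/m), ← Finset.card_product]
    apply Finset.card_le_card_of_injOn (fun p => p.2 * m + p.1)
    · rintro ⟨g, k⟩ hp
      rw [Finset.mem_coe, Finset.mem_product] at hp
      obtain ⟨hg, hk⟩ := hp
      have hgm : g < m := Finset.mem_range.mp (hG hg)
      rw [Finset.mem_range] at hk
      rw [Finset.mem_coe, hS, Finset.mem_filter, Finset.mem_range]
      refine ⟨?_, ?_⟩
      · show k * m + g < N
        have h1 : (k+1) * m ≤ (N/m)*m := Nat.mul_le_mul_right m hk
        have h2 : (N/m)*m ≤ N := Nat.div_mul_le_self N m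
        have h3 : (k+1)*m = k*m + m := by ring
        omega
      · show (k * m + g) % m ∈ G
        have h4 : (g + k * m) % m = g % m := Nat.add_mul_mod_self_right g k m
        rw [show k*m+g = g+k*m by ring, h4, Nat.mod_eq_of_lt hgm]
        exact hg
    · rintro ⟨g1,k1⟩ hp1 ⟨g2,k2⟩ hp2 heq
      simp only [Finset.coe_product, Set.mem_prod, Finset.mem_coe] at hp1 hp2
      have hg1 : g1 < m := Finset.mem_range.mp (hG hp1.1)
      have hg2 : g2 < m := Finset.mem_range.mp (hG hp2.1)
      simp only at heq
      have hgeq : g1 = g2 := by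
        have e1 : (g1 + k1 * m) % m = g1 := by
          rw [Nat.add_mul_mod_self_right, Nat.mod_eq_of_lt hg1]
        have e2 : (g2 + k2 * m) % m = g2 := by
          rw [Nat.add_mul_mod_self_right, Nat.mod_eq_of_lt hg2]
        rw [show k1*m+g1 = g1+k1*m by ring, show k2*m+g2 = g2+k2*m by ring] at heq
        rw [← e1, ← e2, heq]
      subst hgeq
      have hkeq : k1 = k2 := by
        have : k1 * m = k2 * m := by omega
        exact Nat.eq_of_mul_eq_mul_right hmpos' this
      rw [hkeq]
  have hK : ((N:ℝ) - m)/m ≤ ((N/m : ℕ):ℝ) := by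
    have hdm := Nat.div_add_mod N m
    have hmod : N % m < m := Nat.mod_lt N hmpos'
    have hcast : (m:ℝ) * ((N/m:ℕ):ℝ) + ((N % m : ℕ):ℝ) = N := by exact_mod_cast hdm
    have hmodR : ((N%m:ℕ):ℝ) < m := by exact_mod_cast hmod
    rw [div_le_iff₀ hmpos]
    nlinarith
  have hGc : (m:ℝ) + 1 ≤ 2 * G.card := by
    have hnat : m < 2 * G.card := by exact_mod_cast (by push_cast; linarith : (m:ℝ) < 2*(G.card:ℝ))
    exact_mod_cast hnat
  have hNm : (0:ℝ) ≤ (N:ℝ) - m := by nlinarith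
  have hScard : ((N:ℝ) - m) * ((m:ℝ)+1) / (2*m) ≤ (S.card : ℝ) := by
    have h1 : (G.card:ℝ) * ((N/m : ℕ):ℝ) ≤ (S.card:ℝ) := by exact_mod_cast hcard
    have hK0 : (0:ℝ) ≤ ((N/m : ℕ):ℝ) := Nat.cast_nonneg _
    have t1 : ((N:ℝ)-m)/m * (((m:ℝ)+1)/2) ≤ ((N/m:ℕ):ℝ) * (G.card:ℝ) := by
      apply mul_le_mul hK (by linarith) (by positivity) hK0
    have heq2 : ((N:ℝ) - m) * ((m:ℝ)+1) / (2*m) = ((N:ℝ)-m)/m * (((m:ℝ)+1)/2) := by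
      rw [div_mul_div_comm, mul_comm (m:ℝ) 2]
    rw [heq2]
    nlinarith
  -- final assembly
  rw [ge_iff_le, hrpow]
  have hc0 : (0:ℝ) ≤ (1-2*ε)^l := pow_nonneg (by linarith) l
  have hfin : (1 - (m:ℝ)/N) * (1/2 + 1/(2*m)) * (1-2*ε)^l
      ≤ (S.card : ℝ) * ((1/2:ℝ) - ε)^l := by
    have heq3 : ((1/2:ℝ) - ε)^l = (1/(N:ℝ)) * (1-2*ε)^l := by
      rw [show ((1:ℝ)/2 - ε) = (1/2)*(1-2*ε) by ring, mul_pow,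
        show ((1:ℝ)/2)^l = 1/(N:ℝ) by rw [hNR, one_div, one_div, ← inv_pow]]
    rw [heq3, show (S.card:ℝ) * (1/(N:ℝ) * (1-2*ε)^l) = ((S.card:ℝ)/N) * (1-2*ε)^l by ring]
    apply mul_le_mul_of_nonneg_right ?_ hc0
    rw [le_div_iff₀ hNposR]
    have heq5 : (1 - (m:ℝ)/N) * (1/2 + 1/(2*m)) * N = ((N:ℝ) - m) * ((m:ℝ)+1) / (2*m) := by
      field_simp
      all_goals first | exact Or.inl trivial | ring
    rw [heq5]
    exact hScard
  linarith
end
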